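/- Let K ⊆ ℝ^k be compact and f(x) = dist(x, K). Let ε ≥ 0, δ > 0 with 2δ + ε < 1. Suppose x ∈ ℝ^k and 0 < r < dist(x, K), and there exist z₁, z₂ ∈ K with |x - zᵢ| ≤ dist(x, K) + ε·r for i = 1, 2. Suppose further that f is δ-coarsely differentiable on B(x, r), i.e., there is an affine function λ : ℝ^k → ℝ with |f(p) - λ(p)| ≤ δ·r for all p ∈ B(x, r). Then the angle θ between the segments [x, z₁] and [x, z₂] satisfies |θ| ≤ arccos(2·((1 - (2δ + ε))/(1 + 2δ))² - 1). -/

import Mathlib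

open Metric InnerProductGeometry RealInnerProductSpace

lemma my_arccos_antitone : Antitone Real.arccos := fun a b h => by
  unfold Real.arccos
  have := Real.monotone_arcsin h
  linarith

theorem angle_bound_of_coarse_differentiable (k : ℕ) (K : Set (EuclideanSpace ℝ (Fin k)))
    (hKc : IsCompact K) (hK : K.Nonempty)
    (ε δ : ℝ) (hε : 0 ≤ ε) (hδ : 0 < δ) (hεδ : 2 * δ + ε < 1)
    (x : EuclideanSpace ℝ (Fin k)) (r : ℝ) (hr : 0 < r) (hrd : r < Metric.infDist x K)
    (z₁ z₂ : EuclideanSpace ℝ (Fin k)) (hz₁ : z₁ ∈ K) (hz₂ : z₂ ∈ K)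
    (hd₁ : dist x z₁ ≤ Metric.infDist x K + ε * r)
    (hd₂ : dist x z₂ ≤ Metric.infDist x K + ε * r)
    (hcd : ∃ lam : EuclideanSpace ℝ (Fin k) →ᵃ[ℝ] ℝ,
      ∀ p ∈ Metric.closedBall x r, |Metric.infDist p K - lam p| ≤ δ * r) :
    InnerProductGeometry.angle (z₁ - x) (z₂ - x) ≤
      Real.arccos (2 * ((1 - (2 * δ + ε)) / (1 + 2 * δ)) ^ 2 - 1) := by
  obtain ⟨lam, hlam⟩ := hcd
  set d := Metric.infDist x K with hddef
  have hd1 : d ≤ dist x z₁ := Metric.infDist_le_dist_of_mem hz₁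
  have hd2 : d ≤ dist x z₂ := Metric.infDist_le_dist_of_mem hz₂
  have hn₁e : dist x z₁ = ‖z₁ - x‖ := by rw [dist_eq_norm, norm_sub_rev]
  have hn₂e : dist x z₂ = ‖z₂ - x‖ := by rw [dist_eq_norm, norm_sub_rev]
  set n₁ := ‖z₁ - x‖ with hn₁def
  set n₂ := ‖z₂ - x‖ with hn₂def
  have hrn₁ : r < n₁ := by rw [← hn₁e]; linarith
  have hrn₂ : r < n₂ := by rw [← hn₂e]; linarith
  have hn₁0 : 0 < n₁ := lt_trans hr hrn₁
  have hn₂0 : 0 < n₂ := lt_trans hr hrn₂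
  have hz₁x : z₁ - x ≠ 0 := by rw [← norm_pos_iff]; exact hn₁0
  have hz₂x : z₂ - x ≠ 0 := by rw [← norm_pos_iff]; exact hn₂0
  set u₁ : EuclideanSpace ℝ (Fin k) := n₁⁻¹ • (z₁ - x) with hu₁def
  set u₂ : EuclideanSpace ℝ (Fin k) := n₂⁻¹ • (z₂ - x) with hu₂def
  have hu₁ : ‖u₁‖ = 1 := norm_smul_inv_norm hz₁x
  have hu₂ : ‖u₂‖ = 1 := norm_smul_inv_norm hz₂x
  set p₁ : EuclideanSpace ℝ (Fin k) := x + r • u₁ with hp₁def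
  set p₂ : EuclideanSpace ℝ (Fin k) := x + r • u₂ with hp₂def
  have hp₁mem : p₁ ∈ Metric.closedBall x r := by
    simp [hp₁def, Metric.mem_closedBall, dist_eq_norm, norm_smul, hu₁, abs_of_pos hr]
  have hp₂mem : p₂ ∈ Metric.closedBall x r := by
    simp [hp₂def, Metric.mem_closedBall, dist_eq_norm, norm_smul, hu₂, abs_of_pos hr]
  -- distance from p_i to z_i
  have hpz₁ : ‖p₁ - z₁‖ = n₁ - r := by
    have h : p₁ - z₁ = (r * n₁⁻¹ - 1) • (z₁ - x) := by
      rw [hp₁def, hu₁def, smul_smul]; module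
    rw [h, norm_smul, Real.norm_eq_abs, ← hn₁def]
    have : r * n₁⁻¹ - 1 ≤ 0 := by
      rw [sub_nonpos]
      rw [mul_inv_le_iff₀ hn₁0]; linarith
    rw [abs_of_nonpos this]
    field_simp; ring
  have hpz₂ : ‖p₂ - z₂‖ = n₂ - r := by
    have h : p₂ - z₂ = (r * n₂⁻¹ - 1) • (z₂ - x) := by
      rw [hp₂def, hu₂def, smul_smul]; module
    rw [h, norm_smul, Real.norm_eq_abs, ← hn₂def]
    have : r * n₂⁻¹ - 1 ≤ 0 := by
      rw [sub_nonpos]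
      rw [mul_inv_le_iff₀ hn₂0]; linarith
    rw [abs_of_nonpos this]
    field_simp; ring
  have hip₁ : Metric.infDist p₁ K ≤ n₁ - r := by
    calc Metric.infDist p₁ K ≤ dist p₁ z₁ := Metric.infDist_le_dist_of_mem hz₁
    _ = n₁ - r := by rw [dist_eq_norm, hpz₁]
  have hip₂ : Metric.infDist p₂ K ≤ n₂ - r := by
    calc Metric.infDist p₂ K ≤ dist p₂ z₂ := Metric.infDist_le_dist_of_mem hz₂
    _ = n₂ - r := by rw [dist_eq_norm, hpz₂]
  -- midpoint m
  set A := ‖u₁ + u₂‖ with hAdef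
  have hA0 : 0 ≤ A := norm_nonneg _
  have hA2 : A ≤ 2 := by
    calc A ≤ ‖u₁‖ + ‖u₂‖ := norm_add_le _ _
    _ = 2 := by rw [hu₁, hu₂]; norm_num
  set m : EuclideanSpace ℝ (Fin k) := x + (r / 2) • (u₁ + u₂) with hmdef
  have hmx : dist m x = (r / 2) * A := by
    rw [hmdef, dist_eq_norm, add_sub_cancel_left, norm_smul, Real.norm_eq_abs,
      abs_of_pos (by linarith : (0:ℝ) < r / 2)]
  have hmmem : m ∈ Metric.closedBall x r := by
    rw [Metric.mem_closedBall, hmx]; nlinarith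
  have hmid : m = midpoint ℝ p₁ p₂ := by
    rw [midpoint_eq_smul_add, invOf_eq_inv, hmdef, hp₁def, hp₂def, smul_smul, smul_add]
    module
  have hlammid : lam m = (lam p₁ + lam p₂) / 2 := by
    rw [hmid, AffineMap.map_midpoint, midpoint_eq_smul_add, invOf_eq_inv, smul_eq_mul]
    ring
  -- inequalities
  have hinfm : d - (r / 2) * A ≤ Metric.infDist m K := by
    have := Metric.infDist_le_infDist_add_dist (x := x) (y := m) (s := K)
    rw [dist_comm] at this
    rw [← hddef] at this
    linarith [hmx ▸ this]
  have h1 := hlam p₁ hp₁mem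
  have h2 := hlam p₂ hp₂mem
  have h3 := hlam m hmmem
  rw [abs_le] at h1 h2 h3
  have hAge : 2 * (1 - (2 * δ + ε)) ≤ A := by
    have e1 : lam p₁ ≤ d + ε * r - r + δ * r := by
      have := h1.2
      have := hn₁e ▸ hd₁
      linarith
    have e2 : lam p₂ ≤ d + ε * r - r + δ * r := by
      have := h2.2
      have := hn₂e ▸ hd₂
      linarith
    have e3 : d - (r / 2) * A - δ * r ≤ lam m := by linarith [h3.1]
    rw [hlammid] at e3
    have e4 : d - r / 2 * A - δ * r ≤ d + ε * r - r + δ * r := by linarith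
    have : r * (2 * (1 - (2 * δ + ε))) ≤ r * A := by linarith
    exact le_of_mul_le_mul_left this hr
  -- inner product bound
  have hinner : 2 * (1 - (2 * δ + ε)) ^ 2 - 1 ≤ ⟪u₁, u₂⟫ := by
    have hsq : A ^ 2 = 2 + 2 * ⟪u₁, u₂⟫ := by
      rw [hAdef, norm_add_sq_real, hu₁, hu₂]; ring
    have h4 : (2 * (1 - (2 * δ + ε))) * (2 * (1 - (2 * δ + ε))) ≤ A * A :=
      mul_self_le_mul_self (by linarith) hAge
    have h5 : (2 * (1 - (2 * δ + ε))) ^ 2 ≤ A ^ 2 := by rw [pow_two, pow_two]; exact h4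
    linarith [h5, hsq]
  -- rewrite angle
  have hangeq : InnerProductGeometry.angle (z₁ - x) (z₂ - x) = Real.arccos ⟪u₁, u₂⟫ := by
    have : InnerProductGeometry.angle (z₁ - x) (z₂ - x) = InnerProductGeometry.angle u₁ u₂ := by
      rw [hu₁def, hu₂def, InnerProductGeometry.angle_smul_left_of_pos _ _ (inv_pos.mpr hn₁0),
        InnerProductGeometry.angle_smul_right_of_pos _ _ (inv_pos.mpr hn₂0)]
    rw [this, InnerProductGeometry.angle, hu₁, hu₂]
    norm_num
  rw [hangeq]
  apply my_arccos_antitone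
  have hq : (1 - (2 * δ + ε)) / (1 + 2 * δ) ≤ 1 - (2 * δ + ε) := by
    apply div_le_self (by linarith) (by linarith)
  have hq0 : 0 ≤ (1 - (2 * δ + ε)) / (1 + 2 * δ) := div_nonneg (by linarith) (by linarith)
  have hqq : ((1 - (2 * δ + ε)) / (1 + 2 * δ)) ^ 2 ≤ (1 - (2 * δ + ε)) ^ 2 := by
    rw [pow_two, pow_two]; exact mul_self_le_mul_self hq0 hq
  linarith [hinner, hqq]
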